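/- In the MAX-CUT reduction instance, the two-signal scheme induced by a cut achieves revenue 2K₁ + (n−2)K₂ + m + C, where C is the number of edges crossing the cut. Formally: let G=(V,E) be a graph with |V|=n, distinguished vertices x,y ∈ V, and let X ⊆ V with x ∈ X, y ∉ X. Define the signaling scheme φ with two signals σ_x, σ_y by φ(σ_x,u)=1 if u∈X else 0, and φ(σ_y,u)=1−φ(σ_x,u). With the weighted valuations Φ_ℓ(i,u) defined in the reduction (three bidders, Bayesian outcomes ℓ with weights K₁, K₂, 1 as specified), ∑_ℓ ∑_{σ∈{σ_x,σ_y}} secondmax_{i∈{1,2,3}} ∑_{u∈V} Φ_ℓ(i,u)·φ(σ,u) = 2K₁ + (n−2)K₂ + m + |∂X|, where ∂X is the set of edges with exactly one endpoint in X. -/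

import Mathlib

open Finset

/-- The second-largest value of `f` (counting multiplicity): the supremum of
`min (f i) (f j)` over pairs of distinct indices. -/
noncomputable def secondmax {ι : Type*} [Fintype ι] (f : ι → ℝ) : ℝ :=
  sSup {x | ∃ i j : ι, i ≠ j ∧ x = min (f i) (f j)}

/-- A signaling scheme: nonnegative entries, and for each good `j` the signal
probabilities sum to one. -/
def IsScheme {S J : Type*} [Fintype S] (φ : S → J → ℝ) : Prop :=
  (∀ σ j, 0 ≤ φ σ j) ∧ ∀ j, ∑ σ, φ σ j = 1

/-- Revenue of a signaling scheme under normalized valuations `Ψ`. -/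
noncomputable def Rev {S : Type*} [Fintype S] {n : ℕ} {J : Type*} [Fintype J]
    (Ψ : Fin n → J → ℝ) (φ : S → J → ℝ) : ℝ :=
  ∑ σ, secondmax (fun i => ∑ j, φ σ j * Ψ i j)

/-- Vertices of `V ∖ {x,y}`. -/
def Others {n : ℕ} (x y : Fin n) : Finset (Fin n) := (Finset.univ.erase x).erase y

/-- The weighted valuation matrices `Φ_ℓ` of the MAX-CUT reduction: outcome type (a)
with weight `K₁`, types (b),(c) per vertex `u ∉ {x,y}` with weight `K₂`, and type (d)
per edge with weight `1`. -/
noncomputable def Phi {n : ℕ} (K₁ K₂ : ℝ) (x y : Fin n) (E : Finset (Fin n × Fin n)) :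
    (Unit ⊕ (↥(Others x y) ⊕ (↥(Others x y) ⊕ ↥E))) → Fin 3 → Fin n → ℝ
  | Sum.inl _ => fun i u =>
      if i = 0 then (if u = x then K₁ else 0)
      else if i = 1 then (if u = y then K₁ else 0)
      else (if u = x ∨ u = y then K₁ else 0)
  | Sum.inr (Sum.inl w) => fun i u =>
      if i = 0 then (if u = x then K₂ else 0)
      else if i = 1 then (if u = (w : Fin n) then K₂ else 0)
      else 0
  | Sum.inr (Sum.inr (Sum.inl w)) => fun i u =>
      if i = 0 then (if u = y then K₂ else 0)
      else if i = 1 then (if u = (w : Fin n) then K₂ else 0)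
      else 0
  | Sum.inr (Sum.inr (Sum.inr e)) => fun i u =>
      if i = 0 then (if u = (e : Fin n × Fin n).1 then 1 else 0)
      else if i = 1 then (if u = (e : Fin n × Fin n).2 then 1 else 0)
      else (if u = (e : Fin n × Fin n).1 ∨ u = (e : Fin n × Fin n).2 then 1 else 0)

/-- In the MAX-CUT reduction, the two-signal scheme induced by a cut `X` (with `x ∈ X`,
`y ∉ X`) achieves revenue `2K₁ + (n-2)K₂ + |E| + |∂X|`. -/
-- auxiliary lemmas
lemma secondmax_fin3 (f : Fin 3 → ℝ) :
    secondmax f = max (min (f 0) (f 1)) (max (min (f 0) (f 2)) (min (f 1) (f 2))) := by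
  have hset : {x | ∃ i j : Fin 3, i ≠ j ∧ x = min (f i) (f j)} =
      ({min (f 0) (f 1), min (f 0) (f 2), min (f 1) (f 2)} : Set ℝ) := by
    ext v; simp only [Set.mem_setOf_eq, Set.mem_insert_iff, Set.mem_singleton_iff]
    constructor
    · rintro ⟨i, j, hij, rfl⟩
      fin_cases i <;> fin_cases j <;>
        first
          | exact absurd rfl hij
          | exact Or.inl rfl
          | exact Or.inl (min_comm _ _)
          | exact Or.inr (Or.inl rfl)
          | exact Or.inr (Or.inl (min_comm _ _))
          | exact Or.inr (Or.inr rfl)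
          | exact Or.inr (Or.inr (min_comm _ _))
    · rintro (rfl | rfl | rfl)
      exacts [⟨0, 1, by decide, rfl⟩, ⟨0, 2, by decide, rfl⟩, ⟨1, 2, by decide, rfl⟩]
  rw [secondmax, hset]
  rw [csSup_insert (Set.Finite.bddAbove (Set.toFinite _)) (by simp),
      csSup_insert (Set.Finite.bddAbove (Set.toFinite _)) (by simp),
      csSup_singleton]

lemma sum_ite_mul {n : ℕ} (a : Fin n) (c : ℝ) (g : Fin n → ℝ) :
    ∑ u, (if u = a then c else 0) * g u = c * g a := by
  simp [ite_mul, Finset.sum_ite_eq']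

lemma sum_ite_or_mul {n : ℕ} {a b : Fin n} (hab : a ≠ b) (c : ℝ) (g : Fin n → ℝ) :
    ∑ u, (if u = a ∨ u = b then c else 0) * g u = c * g a + c * g b := by
  have h : ∀ u : Fin n, (if u = a ∨ u = b then c else 0)
      = (if u = a then c else 0) + (if u = b then c else 0) := by
    intro u; by_cases h1 : u = a <;> by_cases h2 : u = b <;> simp_all
  simp [h, add_mul, Finset.sum_add_distrib, ite_mul, Finset.sum_ite_eq']

theorem stmt14 {n : ℕ} (hn : 2 ≤ n) (K₁ K₂ : ℝ) (hK₁ : 0 ≤ K₁) (hK₂ : 0 ≤ K₂)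
    (x y : Fin n) (hxy : x ≠ y)
    (E : Finset (Fin n × Fin n)) (hE : ∀ e ∈ E, e.1 ≠ e.2)
    (X : Finset (Fin n)) (hx : x ∈ X) (hy : y ∉ X) :
    ∑ ℓ, ∑ s : Bool, secondmax (fun i : Fin 3 =>
        ∑ u, Phi K₁ K₂ x y E ℓ i u *
          (if s then (if u ∈ X then (1 : ℝ) else 0) else (if u ∈ X then 0 else 1)))
      = 2 * K₁ + ((n : ℝ) - 2) * K₂ + (E.card : ℝ) +
        ((E.filter (fun e => (e.1 ∈ X ∧ e.2 ∉ X) ∨ (e.1 ∉ X ∧ e.2 ∈ X))).card : ℝ) := by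
  classical
  set g : Bool → Fin n → ℝ := fun s u =>
    (if s then (if u ∈ X then (1 : ℝ) else 0) else (if u ∈ X then 0 else 1)) with hg
  -- value of g at specific points
  have hgx : g true x = 1 ∧ g false x = 0 := by simp [hg, hx]
  have hgy : g true y = 0 ∧ g false y = 1 := by simp [hg, hy]
  rw [Fintype.sum_sum_type, Fintype.sum_sum_type, Fintype.sum_sum_type]
  have hA : ∀ l : Unit, (∑ s : Bool, secondmax (fun i : Fin 3 =>
      ∑ u, Phi K₁ K₂ x y E (Sum.inl l) i u * g s u)) = 2 * K₁ := by
    intro l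
    rw [Fintype.sum_bool]
    rw [secondmax_fin3, secondmax_fin3]
    simp only [Phi, show ((0:Fin 3) = 0) = True from by decide,
      show ((1:Fin 3) = 0) = False from by decide, show ((1:Fin 3) = 1) = True from by decide,
      show ((2:Fin 3) = 0) = False from by decide, show ((2:Fin 3) = 1) = False from by decide,
      if_true, if_false]
    rw [sum_ite_mul, sum_ite_mul, sum_ite_mul, sum_ite_mul,
        sum_ite_or_mul hxy, sum_ite_or_mul hxy]
    simp only [hgx.1, hgx.2, hgy.1, hgy.2]
    simp only [mul_one, mul_zero, add_zero, zero_add, min_self,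
      min_eq_right hK₁, min_eq_left hK₁, max_eq_right hK₁, max_eq_left hK₁, max_self]
    ring
  have hB : ∀ w : ↥(Others x y), (∑ s : Bool, secondmax (fun i : Fin 3 =>
      ∑ u, Phi K₁ K₂ x y E (Sum.inr (Sum.inl w)) i u * g s u))
      = if (w : Fin n) ∈ X then K₂ else 0 := by
    intro w
    rw [Fintype.sum_bool, secondmax_fin3, secondmax_fin3]
    simp only [Phi, show ((0:Fin 3) = 0) = True from by decide,
      show ((1:Fin 3) = 0) = False from by decide, show ((1:Fin 3) = 1) = True from by decide,
      show ((2:Fin 3) = 0) = False from by decide, show ((2:Fin 3) = 1) = False from by decide,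
      if_true, if_false]
    rw [sum_ite_mul, sum_ite_mul, sum_ite_mul, sum_ite_mul]
    simp only [zero_mul, Finset.sum_const_zero, hgx.1, hgx.2, hg]
    by_cases hw : (w : Fin n) ∈ X <;>
      simp [hw, hx, hy, min_eq_right hK₂, min_eq_left hK₂, max_eq_right hK₂, max_eq_left hK₂, min_self]
  have hC : ∀ w : ↥(Others x y), (∑ s : Bool, secondmax (fun i : Fin 3 =>
      ∑ u, Phi K₁ K₂ x y E (Sum.inr (Sum.inr (Sum.inl w))) i u * g s u))
      = if (w : Fin n) ∈ X then 0 else K₂ := by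
    intro w
    rw [Fintype.sum_bool, secondmax_fin3, secondmax_fin3]
    simp only [Phi, show ((0:Fin 3) = 0) = True from by decide,
      show ((1:Fin 3) = 0) = False from by decide, show ((1:Fin 3) = 1) = True from by decide,
      show ((2:Fin 3) = 0) = False from by decide, show ((2:Fin 3) = 1) = False from by decide,
      if_true, if_false]
    rw [sum_ite_mul, sum_ite_mul, sum_ite_mul, sum_ite_mul]
    simp only [zero_mul, Finset.sum_const_zero, hgy.1, hgy.2, hg]
    by_cases hw : (w : Fin n) ∈ X <;>
      simp [hw, hx, hy, min_eq_right hK₂, min_eq_left hK₂, max_eq_right hK₂, max_eq_left hK₂, min_self]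
  have hD : ∀ e : ↥E, (∑ s : Bool, secondmax (fun i : Fin 3 =>
      ∑ u, Phi K₁ K₂ x y E (Sum.inr (Sum.inr (Sum.inr e))) i u * g s u))
      = 1 + (if ((e : Fin n × Fin n).1 ∈ X ∧ (e : Fin n × Fin n).2 ∉ X) ∨
          ((e : Fin n × Fin n).1 ∉ X ∧ (e : Fin n × Fin n).2 ∈ X) then (1:ℝ) else 0) := by
    intro e
    have hne : (e : Fin n × Fin n).1 ≠ (e : Fin n × Fin n).2 := hE _ e.2
    rw [Fintype.sum_bool, secondmax_fin3, secondmax_fin3]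
    simp only [Phi, show ((0:Fin 3) = 0) = True from by decide,
      show ((1:Fin 3) = 0) = False from by decide, show ((1:Fin 3) = 1) = True from by decide,
      show ((2:Fin 3) = 0) = False from by decide, show ((2:Fin 3) = 1) = False from by decide,
      if_true, if_false]
    rw [sum_ite_mul, sum_ite_mul, sum_ite_mul, sum_ite_mul,
        sum_ite_or_mul hne, sum_ite_or_mul hne]
    simp only [hg]
    by_cases h1 : (e : Fin n × Fin n).1 ∈ X <;> by_cases h2 : (e : Fin n × Fin n).2 ∈ X <;>
      · simp only [h1, h2, if_true, if_false, not_true, not_false_iff, and_true, and_false,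
          true_and, false_and, or_self, false_or, or_false]
        norm_num [min_def, max_def]
  simp only [hg] at hA hB hC hD
  simp only [hA, hB, hC, hD]
  have hcard : (Others x y).card = n - 2 := by
    rw [Others, Finset.card_erase_of_mem (Finset.mem_erase.2 ⟨hxy.symm, Finset.mem_univ y⟩),
      Finset.card_erase_of_mem (Finset.mem_univ x), Finset.card_univ, Fintype.card_fin]
    omega
  have h1 : (∑ _l : Unit, 2 * K₁) = 2 * K₁ := by simp
  have h23 : (∑ w : ↥(Others x y), if (w : Fin n) ∈ X then K₂ else 0)
      + (∑ w : ↥(Others x y), if (w : Fin n) ∈ X then 0 else K₂) = ((n : ℝ) - 2) * K₂ := by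
    rw [← Finset.sum_add_distrib]
    have step : ∀ w : ↥(Others x y),
        (if (w : Fin n) ∈ X then K₂ else 0) + (if (w : Fin n) ∈ X then 0 else K₂) = K₂ := by
      intro w; by_cases hw : (w : Fin n) ∈ X <;> simp [hw]
    rw [Finset.sum_congr rfl fun w _ => step w, Finset.sum_const, Finset.card_univ,
      Fintype.card_coe, hcard, nsmul_eq_mul]
    rw [Nat.cast_sub hn]
    norm_num
  have h4 : (∑ e : ↥E, (1 + (if ((e : Fin n × Fin n).1 ∈ X ∧ (e : Fin n × Fin n).2 ∉ X) ∨
        ((e : Fin n × Fin n).1 ∉ X ∧ (e : Fin n × Fin n).2 ∈ X) then (1:ℝ) else 0)))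
      = (E.card : ℝ) +
        ((E.filter (fun e => (e.1 ∈ X ∧ e.2 ∉ X) ∨ (e.1 ∉ X ∧ e.2 ∈ X))).card : ℝ) := by
    rw [Finset.univ_eq_attach,
      Finset.sum_attach E (fun e => (1 + (if (e.1 ∈ X ∧ e.2 ∉ X) ∨
        (e.1 ∉ X ∧ e.2 ∈ X) then (1:ℝ) else 0))), Finset.sum_add_distrib]
    rw [Finset.sum_const, nsmul_eq_mul, mul_one, Finset.sum_boole]
  linarith [h1, h23, h4]
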